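/- Let n be a positive integer, let σ : ℕ → ℝ be nonnegative and antitone on {1,…,n} (i.e., σ(1) ≥ σ(2) ≥ … ≥ σ(n) ≥ 0) with ∑_{i=1}^n σ(i) ≤ m for a real number m ≥ 0, and let p : ℕ → ℕ satisfy p(i) ≤ i for every i ∈ {1,…,n} and ∑_{i=1}^n p(i) ≤ P for a natural number P. Then ∑_{i=1}^n σ(i)·p(i) ≤ m·(2·√P + 1). (This is the extremal combinatorial inequality underlying the theorem that the fast triangle-counting algorithm runs in O(TriEnum + m·√τ) time: σ(i) is the number of temporal edges on the i-th node pair and p(i) is the number of times that pair's edges are processed.) -/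

import Mathlib

/-- The extremal combinatorial inequality underlying the `O(TriEnum + m·√τ)` running-time
theorem for the fast temporal triangle counting algorithm: if `σ` is a nonnegative antitone
sequence on `{1,…,n}` with total at most `m`, and `p i ≤ i` with `∑ p i ≤ P`, then
`∑ σ i * p i ≤ m * (2√P + 1)`. -/
theorem sum_sigma_mul_p_le (n : ℕ) (hn : 0 < n) (σ : ℕ → ℝ) (m : ℝ) (hm : 0 ≤ m)
    (hσ0 : ∀ i ∈ Finset.Icc 1 n, 0 ≤ σ i)
    (hσa : ∀ i j, 1 ≤ i → i ≤ j → j ≤ n → σ j ≤ σ i)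
    (hσm : ∑ i ∈ Finset.Icc 1 n, σ i ≤ m)
    (p : ℕ → ℕ) (P : ℕ)
    (hp : ∀ i ∈ Finset.Icc 1 n, p i ≤ i)
    (hP : ∑ i ∈ Finset.Icc 1 n, p i ≤ P) :
    ∑ i ∈ Finset.Icc 1 n, σ i * p i ≤ m * (2 * Real.sqrt P + 1) := by
  set k : ℕ := Nat.sqrt P + 1 with hkdef
  have hk1 : 1 ≤ k := Nat.le_add_left 1 _
  have hkR : (0:ℝ) < (k:ℝ) := by exact_mod_cast hk1
  have hsqnn : (0:ℝ) ≤ Real.sqrt P := Real.sqrt_nonneg _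
  -- √P ≤ k
  have hsP : Real.sqrt P ≤ (k:ℝ) := by
    have h1 : (P:ℝ) ≤ (k:ℝ) * (k:ℝ) := by
      have := Nat.lt_succ_sqrt P
      have : P ≤ k * k := le_of_lt this
      exact_mod_cast this
    calc Real.sqrt P ≤ Real.sqrt ((k:ℝ) * (k:ℝ)) := Real.sqrt_le_sqrt h1
      _ = (k:ℝ) := Real.sqrt_mul_self (le_of_lt hkR)
  -- k ≤ √P + 1
  have hkle : (k:ℝ) ≤ Real.sqrt P + 1 := by
    have h1 : ((Nat.sqrt P : ℝ)) ≤ Real.sqrt P := by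
      rw [show (P:ℝ) = ((P:ℕ):ℝ) from rfl]
      have h2 : ((Nat.sqrt P : ℕ) : ℝ) ^ 2 ≤ (P:ℝ) := by
        have hnat : Nat.sqrt P ^ 2 ≤ P := by rw [pow_two]; exact Nat.sqrt_le P
        exact_mod_cast hnat
      nlinarith [Real.sq_sqrt (show (0:ℝ) ≤ (P:ℝ) by positivity), Real.sqrt_nonneg (P:ℝ),
        sq_nonneg (((Nat.sqrt P : ℕ) : ℝ) - Real.sqrt P)]
    rw [hkdef]; push_cast
    linarith
  set K : ℕ := min k n with hKdef
  have hK1 : 1 ≤ K := le_min hk1 hn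
  have hKn : K ≤ n := min_le_right _ _
  have hKk : K ≤ k := min_le_left _ _
  -- split the sum
  have hsplit : ∀ f : ℕ → ℝ, ∑ i ∈ Finset.Icc 1 n, f i
      = ∑ i ∈ Finset.Icc 1 K, f i + ∑ i ∈ Finset.Ioc K n, f i := by
    intro f
    have e1 : Finset.Icc 1 n = Finset.Ioc 0 n := by ext x; simp; omega
    have e2 : Finset.Icc 1 K = Finset.Ioc 0 K := by ext x; simp; omega
    rw [e1, e2]
    exact (Finset.sum_Ioc_consecutive f (Nat.zero_le K) hKn).symm
  rw [hsplit]
  -- head bound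
  have headb : ∑ i ∈ Finset.Icc 1 K, σ i * p i ≤ (k:ℝ) * m := by
    have h1 : ∑ i ∈ Finset.Icc 1 K, σ i * p i ≤ ∑ i ∈ Finset.Icc 1 K, (k:ℝ) * σ i := by
      apply Finset.sum_le_sum
      intro i hi
      simp only [Finset.mem_Icc] at hi
      have hin : i ∈ Finset.Icc 1 n := Finset.mem_Icc.mpr ⟨hi.1, le_trans hi.2 hKn⟩
      have hpi : (p i : ℝ) ≤ (k:ℝ) := by
        have : p i ≤ k := le_trans (hp i hin) (le_trans hi.2 hKk)
        exact_mod_cast this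
      have hσi : 0 ≤ σ i := hσ0 i hin
      calc σ i * (p i:ℝ) ≤ σ i * (k:ℝ) := by
            exact mul_le_mul_of_nonneg_left hpi hσi
        _ = (k:ℝ) * σ i := mul_comm _ _
    have h2 : ∑ i ∈ Finset.Icc 1 K, σ i ≤ ∑ i ∈ Finset.Icc 1 n, σ i := by
      apply Finset.sum_le_sum_of_subset_of_nonneg
      · exact Finset.Icc_subset_Icc_right hKn
      · intro i hi _; exact hσ0 i hi
    rw [← Finset.mul_sum] at h1
    calc ∑ i ∈ Finset.Icc 1 K, σ i * p i ≤ (k:ℝ) * ∑ i ∈ Finset.Icc 1 K, σ i := h1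
      _ ≤ (k:ℝ) * m := by
          apply mul_le_mul_of_nonneg_left _ (le_of_lt hkR)
          exact le_trans h2 hσm
  -- tail bound
  have tailb : ∑ i ∈ Finset.Ioc K n, σ i * p i ≤ m * Real.sqrt P := by
    rcases Finset.eq_empty_or_nonempty (Finset.Ioc K n) with he | hne
    · rw [he, Finset.sum_empty]; positivity
    · -- tail nonempty means K < n, so K = k
      obtain ⟨j, hj⟩ := hne
      simp only [Finset.mem_Ioc] at hj
      have hKltn : K < n := lt_of_lt_of_le hj.1 hj.2
      have hKeqk : K = k := by
        rcases min_cases k n with ⟨h, _⟩ | ⟨h, hle⟩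
        · exact h
        · omega
      -- each σ i for i in tail satisfies k * σ i ≤ m
      have hbd : ∀ i ∈ Finset.Ioc K n, (k:ℝ) * σ i ≤ m := by
        intro i hi
        simp only [Finset.mem_Ioc] at hi
        have h1 : ∑ j ∈ Finset.Icc 1 K, σ i ≤ ∑ j ∈ Finset.Icc 1 K, σ j := by
          apply Finset.sum_le_sum
          intro j hj'
          simp only [Finset.mem_Icc] at hj'
          exact hσa j i hj'.1 (le_of_lt (lt_of_le_of_lt hj'.2 hi.1)) hi.2
        rw [Finset.sum_const, Nat.card_Icc] at h1
        simp only [Nat.add_sub_cancel] at h1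
        have h2 : ∑ j ∈ Finset.Icc 1 K, σ j ≤ ∑ j ∈ Finset.Icc 1 n, σ j := by
          apply Finset.sum_le_sum_of_subset_of_nonneg
          · exact Finset.Icc_subset_Icc_right hKn
          · intro j hj' _; exact hσ0 j hj'
        have : (K:ℝ) * σ i ≤ m := by
          have := le_trans h1 (le_trans h2 hσm)
          simpa using this
        rw [hKeqk] at this
        exact this
      -- sum over tail
      have h3 : (k:ℝ) * ∑ i ∈ Finset.Ioc K n, σ i * p i ≤ m * (P:ℝ) := by
        rw [Finset.mul_sum]
        have h4 : ∑ i ∈ Finset.Ioc K n, (k:ℝ) * (σ i * p i)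
            ≤ ∑ i ∈ Finset.Ioc K n, m * (p i : ℝ) := by
          apply Finset.sum_le_sum
          intro i hi
          have hpi : (0:ℝ) ≤ (p i : ℝ) := by positivity
          have := hbd i hi
          nlinarith [this, hpi]
        have h5 : ∑ i ∈ Finset.Ioc K n, (p i : ℝ) ≤ (P:ℝ) := by
          have hsub : Finset.Ioc K n ⊆ Finset.Icc 1 n := by
            intro i hi
            simp only [Finset.mem_Ioc] at hi
            exact Finset.mem_Icc.mpr ⟨le_trans hK1 (le_of_lt hi.1), hi.2⟩
          have : ∑ i ∈ Finset.Ioc K n, p i ≤ ∑ i ∈ Finset.Icc 1 n, p i := by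
            apply Finset.sum_le_sum_of_subset_of_nonneg hsub
            intro i _ _; exact Nat.zero_le _
          have h6 : ∑ i ∈ Finset.Ioc K n, p i ≤ P := le_trans this hP
          calc ∑ i ∈ Finset.Ioc K n, (p i : ℝ)
              = ((∑ i ∈ Finset.Ioc K n, p i : ℕ) : ℝ) := by push_cast; ring
            _ ≤ (P:ℝ) := by exact_mod_cast h6
        calc ∑ i ∈ Finset.Ioc K n, (k:ℝ) * (σ i * p i)
            ≤ ∑ i ∈ Finset.Ioc K n, m * (p i : ℝ) := h4
          _ = m * ∑ i ∈ Finset.Ioc K n, (p i : ℝ) := by rw [Finset.mul_sum]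
          _ ≤ m * (P:ℝ) := mul_le_mul_of_nonneg_left h5 hm
      -- m * P ≤ k * (m * √P)
      have h7 : m * (P:ℝ) ≤ (k:ℝ) * (m * Real.sqrt P) := by
        have hPsq : (P:ℝ) = Real.sqrt P * Real.sqrt P :=
          (Real.mul_self_sqrt (by positivity)).symm
        nlinarith [mul_le_mul_of_nonneg_left hsP hsqnn, hm, hsqnn]
      have := le_trans h3 h7
      exact le_of_mul_le_mul_left this hkR
  calc ∑ i ∈ Finset.Icc 1 K, σ i * p i + ∑ i ∈ Finset.Ioc K n, σ i * p i
      ≤ (k:ℝ) * m + m * Real.sqrt P := add_le_add headb tailb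
    _ ≤ m * (2 * Real.sqrt P + 1) := by nlinarith [hkle, hm, hsqnn]
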